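/- Per-user mutual information is nonincreasing in the number of users of the binary OR multiple access channel: for any p ∈ (0,1) and any integers 1 ≤ t ≤ k, if I_m denotes the mutual information I(X_1,…,X_m ; Y_m) of the m-user binary OR multiple access channel at parameter p (with the same channel W for every m), then I_t / t ≥ I_k / k. -/

import Mathlib

open Finset
open scoped Classical

noncomputable section

/-- The Bernoulli probability mass function on `Bool` with parameter `p`. -/
def bern (p : ℝ) (b : Bool) : ℝ := if b then p else 1 - p

/-- The binary OR of a finite family of bits. -/
def orB {t : ℕ} (x : Fin t → Bool) : Bool := decide (∃ i, x i = true)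

/-- Mutual information (natural logarithm) of a joint pmf on a product of two finite sets. -/
def MI {A B : Type} [Fintype A] [Fintype B] (μ : A → B → ℝ) : ℝ :=
  ∑ a : A, ∑ b : B,
    μ a b * Real.log (μ a b / ((∑ b' : B, μ a b') * (∑ a' : A, μ a' b)))

/-- Joint pmf of `((X_1,…,X_m), Y_m)` for the `m`-user binary OR multiple access channel at
parameter `p` with channel `W`: the `X_i` are i.i.d. Bernoulli(`p`), `Z` is their binary OR,
and `Y_m ∼ W(·|Z)`. -/
def macJoint {Y : Type} [Fintype Y] (W : Y → Bool → ℝ) (p : ℝ) (m : ℕ)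
    (x : Fin m → Bool) (y : Y) : ℝ :=
  (∏ i, bern p (x i)) * W y (orB x)

/-- Closed form of the `m`-user mutual information as a function of `q = P(Z = 1)`. -/
def Gfun {Y : Type} [Fintype Y] (W : Y → Bool → ℝ) (q : ℝ) : ℝ :=
  (∑ y : Y, Real.negMulLog ((1 - q) * W y false + q * W y true))
    - ((1 - q) * ∑ y : Y, Real.negMulLog (W y false)
        + q * ∑ y : Y, Real.negMulLog (W y true))

lemma Gfun_zero {Y : Type} [Fintype Y] (W : Y → Bool → ℝ) : Gfun W 0 = 0 := by
  simp [Gfun]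

lemma Gfun_one {Y : Type} [Fintype Y] (W : Y → Bool → ℝ) : Gfun W 1 = 0 := by
  simp [Gfun]

lemma Gfun_concave {Y : Type} [Fintype Y] (W : Y → Bool → ℝ)
    (hW0 : ∀ y z, 0 ≤ W y z) {s u v : ℝ}
    (hs0 : 0 ≤ s) (hs1 : s ≤ 1) (hu0 : 0 ≤ u) (hu1 : u ≤ 1) (hv0 : 0 ≤ v) (hv1 : v ≤ 1) :
    (1 - s) * Gfun W u + s * Gfun W v ≤ Gfun W ((1 - s) * u + s * v) := by
  have key : ∀ y : Y,
      (1 - s) * Real.negMulLog ((1 - u) * W y false + u * W y true)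
        + s * Real.negMulLog ((1 - v) * W y false + v * W y true)
      ≤ Real.negMulLog ((1 - ((1 - s) * u + s * v)) * W y false
          + ((1 - s) * u + s * v) * W y true) := by
    intro y
    have h1 : (0:ℝ) ≤ (1 - u) * W y false + u * W y true :=
      add_nonneg (mul_nonneg (by linarith) (hW0 y false)) (mul_nonneg hu0 (hW0 y true))
    have h2 : (0:ℝ) ≤ (1 - v) * W y false + v * W y true :=
      add_nonneg (mul_nonneg (by linarith) (hW0 y false)) (mul_nonneg hv0 (hW0 y true))
    have hcc := Real.concaveOn_negMulLog.2 (Set.mem_Ici.2 h1) (Set.mem_Ici.2 h2)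
      (by linarith : (0:ℝ) ≤ 1 - s) hs0 (by ring)
    have e : (1 - ((1 - s) * u + s * v)) * W y false + ((1 - s) * u + s * v) * W y true
        = (1 - s) * ((1 - u) * W y false + u * W y true)
          + s * ((1 - v) * W y false + v * W y true) := by ring
    rw [e]
    simpa [smul_eq_mul] using hcc
  have hsum := Finset.sum_le_sum (fun y (_ : y ∈ (univ : Finset Y)) => key y)
  have hA : (1 - s) * (∑ y : Y, Real.negMulLog ((1 - u) * W y false + u * W y true))
      + s * (∑ y : Y, Real.negMulLog ((1 - v) * W y false + v * W y true))
      ≤ ∑ y : Y, Real.negMulLog ((1 - ((1 - s) * u + s * v)) * W y false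
          + ((1 - s) * u + s * v) * W y true) := by
    rw [Finset.mul_sum, Finset.mul_sum, ← Finset.sum_add_distrib]
    exact hsum
  unfold Gfun
  set Sf := ∑ y : Y, Real.negMulLog (W y false)
  set St := ∑ y : Y, Real.negMulLog (W y true)
  have hlin : (1 - s) * ((1 - u) * Sf + u * St) + s * ((1 - v) * Sf + v * St)
      = (1 - ((1 - s) * u + s * v)) * Sf + ((1 - s) * u + s * v) * St := by ring
  nlinarith [hA, hlin]

lemma MI_macJoint {Y : Type} [Fintype Y] (W : Y → Bool → ℝ)
    (hW0 : ∀ y z, 0 ≤ W y z) (hW1 : ∀ z, ∑ y : Y, W y z = 1)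
    {p : ℝ} (hp : p ∈ Set.Ioo (0 : ℝ) 1) {m : ℕ} (hm : 1 ≤ m) :
    MI (macJoint W p m) = Gfun W (1 - (1 - p) ^ m) := by
  obtain ⟨hp0, hp1⟩ := hp
  set a : ℝ := 1 - p with ha
  have ha0 : 0 < a := by simp [ha]; linarith
  have ha1 : a < 1 := by simp [ha]; linarith
  set q : ℝ := 1 - a ^ m with hqdef
  have ham0 : 0 < a ^ m := pow_pos ha0 m
  have ham1 : a ^ m < 1 := pow_lt_one₀ ha0.le ha1 (by omega)
  have hq0 : 0 < q := by simp [hqdef]; linarith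
  have hq1 : q < 1 := by simp [hqdef]; linarith
  have h1q : 1 - q = a ^ m := by simp [hqdef]
  set P : (Fin m → Bool) → ℝ := fun x => ∏ i, bern p (x i) with hP
  have hPpos : ∀ x, 0 < P x := by
    intro x
    refine Finset.prod_pos fun i _ => ?_
    cases h : x i <;> simp [bern] <;> linarith
  -- total sum of P is 1
  have hPsum : ∑ x : Fin m → Bool, P x = 1 := by
    rw [hP, ← Fintype.piFinset_univ, ← Finset.prod_univ_sum]
    have hb : bern p true + bern p false = 1 := by simp [bern]
    simp [hb]
  have hfilter : (univ.filter (fun x : Fin m → Bool => orB x = false)) = {fun _ => false} := by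
    ext x; simp [orB, funext_iff]
  have hPfalse : ∑ x ∈ univ.filter (fun x : Fin m → Bool => orB x = false), P x = a ^ m := by
    rw [hfilter, Finset.sum_singleton, hP]
    simp [bern, ha]
  have hsplit : ∀ f : (Fin m → Bool) → ℝ,
      ∑ x : Fin m → Bool, f x
        = (∑ x ∈ univ.filter (fun x => orB x = false), f x)
          + ∑ x ∈ univ.filter (fun x => orB x = true), f x := by
    intro f
    have hfT : univ.filter (fun x : Fin m → Bool => ¬ orB x = false)
        = univ.filter (fun x => orB x = true) := by
      ext x; simp
    rw [← Finset.sum_filter_add_sum_filter_not univ (fun x => orB x = false) f, hfT]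
  have hPtrue : ∑ x ∈ univ.filter (fun x : Fin m → Bool => orB x = true), P x = q := by
    have := hsplit P
    rw [hPsum, hPfalse] at this
    simp [hqdef]; linarith
  have hsum_orB : ∀ g : Bool → ℝ,
      ∑ x : Fin m → Bool, P x * g (orB x) = a ^ m * g false + q * g true := by
    intro g
    rw [hsplit (fun x => P x * g (orB x))]
    have h1 : ∑ x ∈ univ.filter (fun x : Fin m → Bool => orB x = false), P x * g (orB x)
        = a ^ m * g false := by
      rw [← hPfalse, Finset.sum_mul]
      refine Finset.sum_congr rfl fun x hx => ?_
      rw [(Finset.mem_filter.1 hx).2]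
    have h2 : ∑ x ∈ univ.filter (fun x : Fin m → Bool => orB x = true), P x * g (orB x)
        = q * g true := by
      rw [← hPtrue, Finset.sum_mul]
      refine Finset.sum_congr rfl fun x hx => ?_
      rw [(Finset.mem_filter.1 hx).2]
    rw [h1, h2]
  set M : Y → ℝ := fun y => (1 - q) * W y false + q * W y true with hM
  have hrow : ∀ x, ∑ y : Y, macJoint W p m x y = P x := by
    intro x
    unfold macJoint
    rw [← Finset.mul_sum, hW1]
    simp [hP]
  have hcol : ∀ y, ∑ x : Fin m → Bool, macJoint W p m x y = M y := by
    intro y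
    unfold macJoint
    have := hsum_orB (fun z => W y z)
    rw [hM]; rw [h1q]
    simpa [hP] using this
  have hMpos : ∀ y z, W y z ≠ 0 → 0 < M y := by
    intro y z hz
    have hzpos : 0 < W y z := lt_of_le_of_ne (hW0 y z) (Ne.symm hz)
    have h0 : 0 ≤ (1 - q) * W y false := mul_nonneg (by linarith) (hW0 y false)
    have h1 : 0 ≤ q * W y true := mul_nonneg hq0.le (hW0 y true)
    rw [hM]
    cases z with
    | false =>
        have : 0 < (1 - q) * W y false := mul_pos (by linarith) hzpos
        simpa using by linarith
    | true =>
        have : 0 < q * W y true := mul_pos hq0 hzpos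
        simpa using by linarith
  have hlog : ∀ z y, W y z * Real.log (W y z / M y)
      = W y z * Real.log (W y z) - W y z * Real.log (M y) := by
    intro z y
    rcases eq_or_ne (W y z) 0 with h | h
    · simp [h]
    · rw [Real.log_div h (ne_of_gt (hMpos y z h))]; ring
  -- compute MI
  have hterm : ∀ x y, macJoint W p m x y
        * Real.log (macJoint W p m x y
          / ((∑ y' : Y, macJoint W p m x y') * (∑ x' : Fin m → Bool, macJoint W p m x' y)))
      = P x * (W y (orB x) * Real.log (W y (orB x) / M y)) := by
    intro x y
    rw [hrow x, hcol y]
    show P x * W y (orB x) * Real.log (P x * W y (orB x) / (P x * M y)) = _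
    rw [mul_div_mul_left _ _ (ne_of_gt (hPpos x))]
    ring
  have hMI : MI (macJoint W p m)
      = a ^ m * (∑ y : Y, W y false * Real.log (W y false / M y))
        + q * (∑ y : Y, W y true * Real.log (W y true / M y)) := by
    unfold MI
    calc ∑ x : Fin m → Bool, ∑ y : Y, macJoint W p m x y
          * Real.log (macJoint W p m x y
            / ((∑ y' : Y, macJoint W p m x y') * (∑ x' : Fin m → Bool, macJoint W p m x' y)))
        = ∑ x : Fin m → Bool, P x * ∑ y : Y, W y (orB x) * Real.log (W y (orB x) / M y) := by
          refine Finset.sum_congr rfl fun x _ => ?_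
          rw [Finset.mul_sum]
          exact Finset.sum_congr rfl fun y _ => hterm x y
      _ = _ := hsum_orB (fun z => ∑ y : Y, W y z * Real.log (W y z / M y))
  have hG : Gfun W q = ∑ y : Y, (Real.negMulLog ((1 - q) * W y false + q * W y true)
      - ((1 - q) * Real.negMulLog (W y false) + q * Real.negMulLog (W y true))) := by
    unfold Gfun
    rw [Finset.mul_sum, Finset.mul_sum, ← Finset.sum_add_distrib, ← Finset.sum_sub_distrib]
  rw [hMI, hG, Finset.mul_sum, Finset.mul_sum, ← Finset.sum_add_distrib]
  refine Finset.sum_congr rfl fun y _ => ?_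
  rw [hlog false y, hlog true y]
  have hMy : M y = (1 - q) * W y false + q * W y true := rfl
  simp only [Real.negMulLog, hMy, h1q]
  ring

theorem statement8 (Y : Type) [Fintype Y] (W : Y → Bool → ℝ)
    (hW0 : ∀ y z, 0 ≤ W y z) (hW1 : ∀ z, ∑ y : Y, W y z = 1)
    (p : ℝ) (hp : p ∈ Set.Ioo (0 : ℝ) 1)
    (t k : ℕ) (ht : 1 ≤ t) (htk : t ≤ k) :
    MI (macJoint W p k) / k ≤ MI (macJoint W p t) / t := by
  obtain ⟨hp0, hp1⟩ := hp
  have hk : 1 ≤ k := le_trans ht htk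
  set a : ℝ := 1 - p with ha
  have ha0 : 0 < a := by simp [ha]; linarith
  have ha1 : a < 1 := by simp [ha]; linarith
  set β : ℝ := 1 - a ^ t with hβdef
  set γ : ℝ := 1 - a ^ k with hγdef
  have hat0 : 0 < a ^ t := pow_pos ha0 t
  have hat1 : a ^ t < 1 := pow_lt_one₀ ha0.le ha1 (by omega)
  have hak0 : 0 < a ^ k := pow_pos ha0 k
  have hak1 : a ^ k < 1 := pow_lt_one₀ ha0.le ha1 (by omega)
  have hβ0 : 0 < β := by simp [hβdef]; linarith
  have hβ1 : β < 1 := by simp [hβdef]; linarith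
  have hγ0 : 0 < γ := by simp [hγdef]; linarith
  have hγ1 : γ < 1 := by simp [hγdef]; linarith
  have hβγ : β ≤ γ := by
    have : a ^ k ≤ a ^ t := pow_le_pow_of_le_one ha0.le ha1.le htk
    simp [hβdef, hγdef]; linarith
  -- geometric sums
  have hgeom : ∀ m : ℕ, 1 - a ^ m = (1 - a) * ∑ i ∈ range m, a ^ i := by
    intro m
    have := geom_sum_mul a m
    linear_combination this
  have hqt : γ * t ≤ β * k := by
    have hSkt : ∑ i ∈ range k, a ^ i
        = (∑ i ∈ range t, a ^ i) + ∑ i ∈ Ico t k, a ^ i := by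
      rw [range_eq_Ico, ← Finset.sum_Ico_consecutive _ (Nat.zero_le t) htk, range_eq_Ico]
    have hIco : ∑ i ∈ Ico t k, a ^ i ≤ ((k - t : ℕ) : ℝ) * a ^ (t - 1) := by
      have := Finset.sum_le_card_nsmul (Ico t k) (fun i => a ^ i) (a ^ (t - 1))
        (fun i hi => by
          have hti : t ≤ i := (Finset.mem_Ico.1 hi).1
          exact pow_le_pow_of_le_one ha0.le ha1.le (by omega))
      simpa [Nat.card_Ico, nsmul_eq_mul] using this
    have hSt : (t : ℝ) * a ^ (t - 1) ≤ ∑ i ∈ range t, a ^ i := by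
      have := Finset.card_nsmul_le_sum (range t) (fun i => a ^ i) (a ^ (t - 1))
        (fun i hi => by
          have : i < t := Finset.mem_range.1 hi
          exact pow_le_pow_of_le_one ha0.le ha1.le (by omega))
      simpa [nsmul_eq_mul] using this
    have hkey : (∑ i ∈ range k, a ^ i) * t ≤ (∑ i ∈ range t, a ^ i) * k := by
      have hktR : ((k - t : ℕ) : ℝ) = (k : ℝ) - t := by
        push_cast [Nat.cast_sub htk]; ring
      have ht0 : (0:ℝ) ≤ t := by positivity
      have hktnn : (0:ℝ) ≤ (k : ℝ) - t := by
        have : (t:ℝ) ≤ k := Nat.cast_le.2 htk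
        linarith
      rw [hktR] at hIco
      have h1 := mul_le_mul_of_nonneg_left hIco ht0
      have h2 := mul_le_mul_of_nonneg_left hSt hktnn
      have h3 : (∑ i ∈ range k, a ^ i) * (t:ℝ)
          = (∑ i ∈ range t, a ^ i) * t + (∑ i ∈ Ico t k, a ^ i) * t := by
        rw [hSkt]; ring
      nlinarith [h1, h2, h3]
    have h1a : (0:ℝ) ≤ 1 - a := by linarith
    calc γ * t = (1 - a) * ((∑ i ∈ range k, a ^ i) * t) := by
          rw [hγdef, hgeom k]; ring
      _ ≤ (1 - a) * ((∑ i ∈ range t, a ^ i) * k) :=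
          mul_le_mul_of_nonneg_left hkey h1a
      _ = β * k := by rw [hβdef, hgeom t]; ring
  -- rewrite MIs
  rw [MI_macJoint W hW0 hW1 ⟨hp0, hp1⟩ ht, MI_macJoint W hW0 hW1 ⟨hp0, hp1⟩ hk]
  rw [← ha, ← hβdef, ← hγdef]
  -- nonnegativity of Gfun at β and concavity chord
  have hGβ : 0 ≤ Gfun W β := by
    have := Gfun_concave W hW0 hβ0.le hβ1.le (le_refl (0:ℝ)) zero_le_one zero_le_one
      (le_refl (1:ℝ))
    simpa [Gfun_zero, Gfun_one] using this
  have hchord : β * Gfun W γ ≤ γ * Gfun W β := by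
    have hs0 : 0 ≤ β / γ := div_nonneg hβ0.le hγ0.le
    have hs1 : β / γ ≤ 1 := (div_le_one hγ0).2 hβγ
    have hcc := Gfun_concave W hW0 hs0 hs1 (le_refl (0:ℝ)) zero_le_one hγ0.le hγ1.le
    have he : (1 - β / γ) * 0 + (β / γ) * γ = β := by field_simp; ring
    rw [he, Gfun_zero] at hcc
    have : (β / γ) * Gfun W γ ≤ Gfun W β := by linarith
    have h2 := mul_le_mul_of_nonneg_left this hγ0.le
    have e : γ * ((β / γ) * Gfun W γ) = β * Gfun W γ := by
      field_simp
    linarith [e ▸ h2]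
  have htpos : (0:ℝ) < t := by exact_mod_cast ht
  have hkpos : (0:ℝ) < k := by exact_mod_cast hk
  rw [div_le_div_iff₀ hkpos htpos]
  have h1 := mul_le_mul_of_nonneg_left hchord htpos.le
  have h2 := mul_le_mul_of_nonneg_right hqt hGβ
  nlinarith [h1, h2, hβ0]
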